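/- arXiv:1407.7917 — 7 statements merged into one kernel-verified Lean document; each statement's English description precedes it below -/
import Mathlib

section
/- For every real number ε with 0 < ε < 1 and every natural number i ≥ 1, the sum over j from 0 to i−1 of ((2−ε)^i / 2^{i−j} − (2−ε)^j) is strictly less than −ε·(2−ε)^i + (1+ε)·(2−ε). -/
/-- Potential-change estimate for todolist insertion:
`∑_{j=0}^{i-1} ((2-ε)^i / 2^(i-j) - (2-ε)^j) < -ε(2-ε)^i + (1+ε)(2-ε)`. -/
theorem todolist_potential_change (ε : ℝ) (hε0 : 0 < ε) (hε1 : ε < 1) (i : ℕ) (hi : 1 ≤ i) :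
    ∑ j ∈ Finset.range i, ((2 - ε) ^ i / 2 ^ (i - j) - (2 - ε) ^ j)
      < -ε * (2 - ε) ^ i + (1 + ε) * (2 - ε) := by
  have ha1 : (1:ℝ) < 2 - ε := by linarith
  have h2 : ∀ n : ℕ, ∑ j ∈ Finset.range n, ((1:ℝ)/2) ^ (n - j) = 1 - (1/2) ^ n := by
    intro n
    induction n with
    | zero => simp
    | succ n ih =>
      rw [Finset.sum_range_succ]
      have hcong : ∀ j ∈ Finset.range n, ((1:ℝ)/2) ^ (n + 1 - j) = (1/2) * (1/2) ^ (n - j) := by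
        intro j hj
        have hj' : j ≤ n := le_of_lt (Finset.mem_range.mp hj)
        rw [show n + 1 - j = (n - j) + 1 by omega, pow_succ]
        ring
      rw [Finset.sum_congr rfl hcong, ← Finset.mul_sum, ih]
      simp
      ring
  have hsum : ∑ j ∈ Finset.range i, ((2 - ε) ^ i / 2 ^ (i - j) - (2 - ε) ^ j)
      = (2 - ε) ^ i * (1 - (1/2:ℝ) ^ i) - ((2 - ε) ^ i - 1) / ((2 - ε) - 1) := by
    rw [Finset.sum_sub_distrib, geom_sum_eq (by linarith : (2:ℝ) - ε ≠ 1)]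
    congr 1
    calc ∑ j ∈ Finset.range i, (2 - ε) ^ i / 2 ^ (i - j)
        = (2 - ε) ^ i * ∑ j ∈ Finset.range i, ((1:ℝ)/2) ^ (i - j) := by
          rw [Finset.mul_sum]
          refine Finset.sum_congr rfl fun j hj => ?_
          rw [div_pow, one_pow]
          ring
      _ = (2 - ε) ^ i * (1 - (1/2) ^ i) := by rw [h2]
  rw [hsum]
  have hx : (1:ℝ) ≤ (2 - ε) ^ i := one_le_pow₀ (le_of_lt ha1)
  have hb : (0:ℝ) < (1/2) ^ i := by positivity
  have hc : (0:ℝ) < (2 - ε) - 1 := by linarith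
  rw [← mul_lt_mul_iff_of_pos_right hc, sub_mul, div_mul_cancel₀ _ (ne_of_gt hc)]
  nlinarith [mul_pos (mul_pos (show (0:ℝ) < 1 - ε by linarith) hb)
      (lt_of_lt_of_le one_pos hx),
    mul_nonneg (sq_nonneg ε) (sub_nonneg.mpr hx),
    mul_pos (show (0:ℝ) < 1 - ε^2 by nlinarith) hc,
    mul_pos hb (lt_of_lt_of_le one_pos hx)]
end

section
/- Let α be a linear order and let S and T be finite subsets of α such that the pair (S, T) satisfies the skip property. Fix x ∈ α. (a) If the set {t ∈ T : t < x} is nonempty and S has no element less than x, then {t ∈ T : t < x} has exactly one element. (b) If u is the greatest element of {s ∈ S : s < x}, then the greatest element of {t ∈ T : t < x} is either u itself or the least element of {t ∈ T : u < t}. -/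
/-- A pair `(S, T)` of finite subsets of a linear order satisfies the *skip property* if
`S ⊆ T` and for every two elements `y < z` of `T` with no element of `T` strictly between
them, `y ∈ S` or `z ∈ S`. -/
def SkipProperty {α : Type*} [LinearOrder α] (S T : Finset α) : Prop :=
  S ⊆ T ∧ ∀ y ∈ T, ∀ z ∈ T, y < z → (∀ w ∈ T, ¬(y < w ∧ w < z)) → y ∈ S ∨ z ∈ S

lemma skip_between {α : Type*} [LinearOrder α] {S T : Finset α}
    (h : SkipProperty S T) {a b : α} (ha : a ∈ T) (hb : b ∈ T) (hab : a < b) :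
    ∃ c ∈ S, a ≤ c ∧ c ≤ b := by
  obtain ⟨hST, hskip⟩ := h
  set F := T.filter (fun t => a ≤ t ∧ t < b) with hF
  have hne : F.Nonempty := ⟨a, by simp [hF, ha, hab]⟩
  set y := F.max' hne with hy
  have hyF : y ∈ F := F.max'_mem hne
  simp only [hF, Finset.mem_filter] at hyF
  obtain ⟨hyT, hay, hyb⟩ := hyF
  have hadj : ∀ w ∈ T, ¬(y < w ∧ w < b) := by
    rintro w hw ⟨h1, h2⟩
    have : w ∈ F := by simp [hF, hw, le_trans hay h1.le, h2]
    exact absurd (F.le_max' w this) (not_le.mpr h1)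
  rcases hskip y hyT b hb hyb hadj with hc | hc
  · exact ⟨y, hc, hay, hyb.le⟩
  · exact ⟨b, hc, hab.le, le_refl b⟩

/-- Correctness of todolist search: (a) if `T` has an element less than `x` but `S` does not,
then `T` has exactly one element less than `x`; (b) if `u` is the greatest element of `S`
below `x`, then the greatest element of `T` below `x` is `u` itself or the least element of
`T` above `u`. -/
theorem skipProperty_search {α : Type*} [LinearOrder α] (S T : Finset α)
    (h : SkipProperty S T) (x : α) :
    (((T.filter (fun t => t < x)).Nonempty → (∀ s ∈ S, ¬ s < x) →
        (T.filter (fun t => t < x)).card = 1)) ∧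
    (∀ u : α, IsGreatest {s : α | s ∈ S ∧ s < x} u →
        IsGreatest {t : α | t ∈ T ∧ t < x} u ∨
        ∃ v : α, IsLeast {t : α | t ∈ T ∧ u < t} v ∧
          IsGreatest {t : α | t ∈ T ∧ t < x} v) := by
  constructor
  · intro hne hS
    refine le_antisymm (Finset.card_le_one.mpr ?_) hne.card_pos
    intro a ha b hb
    simp only [Finset.mem_filter] at ha hb
    by_contra hab
    rcases lt_or_gt_of_ne hab with hlt | hlt
    · obtain ⟨c, hcS, _, hcb⟩ := skip_between h ha.1 hb.1 hlt
      exact hS c hcS (lt_of_le_of_lt hcb hb.2)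
    · obtain ⟨c, hcS, _, hcb⟩ := skip_between h hb.1 ha.1 hlt
      exact hS c hcS (lt_of_le_of_lt hcb ha.2)
  · intro u hu
    obtain ⟨⟨huS, hux⟩, hub⟩ := hu
    have huT : u ∈ T := h.1 huS
    have hne : (T.filter (fun t => t < x)).Nonempty :=
      ⟨u, Finset.mem_filter.mpr ⟨huT, hux⟩⟩
    set F := T.filter (fun t => t < x) with hFdef
    set m := F.max' hne with hm
    have hmF : m ∈ F := Finset.max'_mem _ hne
    rw [hFdef, Finset.mem_filter] at hmF
    have hgm : IsGreatest {t : α | t ∈ T ∧ t < x} m := by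
      refine ⟨⟨hmF.1, hmF.2⟩, ?_⟩
      rintro t ⟨htT, htx⟩
      exact F.le_max' t (hFdef ▸ Finset.mem_filter.mpr ⟨htT, htx⟩)
    have hum : u ≤ m := F.le_max' u (hFdef ▸ Finset.mem_filter.mpr ⟨huT, hux⟩)
    rcases eq_or_lt_of_le hum with heq | hlt
    · left; exact heq ▸ hgm
    · right
      refine ⟨m, ⟨⟨hmF.1, hlt⟩, ?_⟩, hgm⟩
      rintro t ⟨htT, hut⟩
      by_contra hlt2
      push_neg at hlt2
      obtain ⟨c, hcS, htc, hcm⟩ := skip_between h htT hmF.1 hlt2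
      have : c ≤ u := hub ⟨hcS, lt_of_le_of_lt hcm hmF.2⟩
      exact absurd (lt_of_lt_of_le hut htc) (not_lt.mpr this)
end

section
/- Let α be a linear order, let T be a finite subset of α with |T| = m, and let t_1 < t_2 < ⋯ < t_m be the increasing enumeration of T. Let S = {t_{2k} : k ≥ 1, 2k ≤ m} be the set of elements of T at even positions. Then the pair (S, T) satisfies the skip property and |S| = ⌊m/2⌋. -/
lemma card_range_odd (m : ℕ) :
    ((Finset.range m).filter (fun x => x % 2 = 1)).card = m / 2 := by
  induction m with
  | zero => simp
  | succ n ih =>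
    rw [Finset.range_add_one, Finset.filter_insert]
    by_cases h : n % 2 = 1
    · rw [if_pos h, Finset.card_insert_of_notMem (by simp), ih]
      omega
    · rw [if_neg h, ih]
      omega

lemma card_fin_odd (m : ℕ) :
    (Finset.univ.filter (fun p : Fin m => p.val % 2 = 1)).card = m / 2 := by
  rw [← card_range_odd m]
  apply Finset.card_bij (fun p _ => p.val)
  · intro a ha
    simp only [Finset.mem_filter, Finset.mem_univ, true_and] at ha
    simp [a.isLt, ha]
  · intro a _ b _ h
    exact Fin.ext h
  · intro b hb
    simp only [Finset.mem_filter, Finset.mem_range] at hb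
    exact ⟨⟨b, hb.1⟩, by simp [hb.2], rfl⟩

/-- Taking every second element of `T` (the elements at even positions in the increasing
enumeration `t_1 < t_2 < ⋯ < t_m` of `T`) yields a set `S` such that `(S, T)` satisfies the
skip property and `|S| = ⌊m/2⌋`. -/
theorem skipProperty_every_second {α : Type*} [LinearOrder α] (T : Finset α) (m : ℕ)
    (hm : T.card = m) (S : Finset α)
    (hS : S = (Finset.univ.filter (fun p : Fin m => p.val % 2 = 1)).image
        (fun p => (T.orderIsoOfFin hm p : α))) :
    SkipProperty S T ∧ S.card = m / 2 := by
  have e := T.orderIsoOfFin hm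
  constructor
  · constructor
    · intro x hx
      rw [hS] at hx
      simp only [Finset.mem_image] at hx
      obtain ⟨p, _, rfl⟩ := hx
      exact (T.orderIsoOfFin hm p).2
    · intro y hy z hz hyz hno
      set i := (T.orderIsoOfFin hm).symm ⟨y, hy⟩ with hi
      set j := (T.orderIsoOfFin hm).symm ⟨z, hz⟩ with hj
      have hij : i < j := by
        rw [hi, hj, OrderIso.lt_iff_lt]
        exact hyz
      have hyi : (T.orderIsoOfFin hm i : α) = y := by
        rw [hi, OrderIso.apply_symm_apply]
      have hzj : (T.orderIsoOfFin hm j : α) = z := by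
        rw [hj, OrderIso.apply_symm_apply]
      have hsucc : (j : ℕ) = (i : ℕ) + 1 := by
        by_contra hne
        have hlt : (i : ℕ) + 1 < (j : ℕ) := by
          have := Fin.lt_iff_val_lt_val.mp hij
          omega
        set k : Fin m := ⟨(i : ℕ) + 1, lt_trans hlt j.isLt⟩ with hk
        have h1 : i < k := by simp [Fin.lt_iff_val_lt_val, hk]
        have h2 : k < j := by simpa [Fin.lt_iff_val_lt_val, hk] using hlt
        have hw1 : y < (T.orderIsoOfFin hm k : α) := by
          rw [← hyi]
          exact_mod_cast (T.orderIsoOfFin hm).lt_iff_lt.mpr h1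
        have hw2 : ((T.orderIsoOfFin hm k : α)) < z := by
          rw [← hzj]
          exact_mod_cast (T.orderIsoOfFin hm).lt_iff_lt.mpr h2
        exact hno _ (T.orderIsoOfFin hm k).2 ⟨hw1, hw2⟩
      rcases Nat.even_or_odd (i : ℕ) with he | ho
      · right
        rw [hS]
        simp only [Finset.mem_image]
        refine ⟨j, ?_, hzj⟩
        simp only [Finset.mem_filter, Finset.mem_univ, true_and]
        rw [Nat.even_iff] at he
        omega
      · left
        rw [hS]
        simp only [Finset.mem_image]
        refine ⟨i, ?_, hyi⟩
        simp only [Finset.mem_filter, Finset.mem_univ, true_and]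
        rw [Nat.odd_iff] at ho
        omega
  · rw [hS, Finset.card_image_of_injective _ ?_, card_fin_odd]
    intro a b hab
    exact (T.orderIsoOfFin hm).injective (Subtype.ext hab)
end

section
/- Let α be a linear order, let S and T be finite subsets of α such that the pair (S, T) satisfies the skip property, and let x ∈ α. Then the pair (S ∪ {x}, T ∪ {x}) also satisfies the skip property. -/
/-- Correctness of todolist insertion: inserting `x` into both lists preserves the
skip property. -/
theorem skipProperty_insert {α : Type*} [LinearOrder α] (S T : Finset α)
    (h : SkipProperty S T) (x : α) :
    SkipProperty (insert x S) (insert x T) := by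
  obtain ⟨hsub, hgap⟩ := h
  constructor
  · exact Finset.insert_subset_insert _ hsub
  · intro y hy z hz hyz hw
    rcases Finset.mem_insert.1 hy with rfl | hy
    · exact Or.inl (Finset.mem_insert_self _ _)
    rcases Finset.mem_insert.1 hz with rfl | hz
    · exact Or.inr (Finset.mem_insert_self _ _)
    have := hgap y hy z hz hyz (fun w hwT => hw w (Finset.mem_insert_of_mem hwT))
    rcases this with h1 | h1
    · exact Or.inl (Finset.mem_insert_of_mem h1)
    · exact Or.inr (Finset.mem_insert_of_mem h1)
end

section
/- Let α be a linear order, let S and T be finite subsets of α such that the pair (S, T) satisfies the skip property, let x ∈ T, and suppose the set {t ∈ T : x < t} is nonempty with least element y. Then the pair ((S \ {x}) ∪ {y}, T \ {x}) satisfies the skip property. -/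
/-- Correctness of todolist deletion: deleting `x` from both lists and splicing the
successor `y` of `x` in `T` into `S` preserves the skip property. -/
theorem skipProperty_delete {α : Type*} [LinearOrder α] (S T : Finset α)
    (h : SkipProperty S T) (x : α) (hx : x ∈ T) (y : α)
    (hy : IsLeast {t : α | t ∈ T ∧ x < t} y) :
    SkipProperty (insert y (S.erase x)) (T.erase x) := by
  obtain ⟨hST, hskip⟩ := h
  obtain ⟨⟨hyT, hxy⟩, hylb⟩ := hy
  constructor
  · intro a ha
    rcases Finset.mem_insert.mp ha with rfl | ha
    · exact Finset.mem_erase.mpr ⟨ne_of_gt hxy, hyT⟩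
    · obtain ⟨hax, haS⟩ := Finset.mem_erase.mp ha
      exact Finset.mem_erase.mpr ⟨hax, hST haS⟩
  · intro a ha b hb hab hgap
    obtain ⟨hax, haT⟩ := Finset.mem_erase.mp ha
    obtain ⟨hbx, hbT⟩ := Finset.mem_erase.mp hb
    by_cases hmid : a < x ∧ x < b
    · -- then y ≤ b and a < y, so y = b
      have hyb : y ≤ b := hylb ⟨hbT, hmid.2⟩
      rcases eq_or_lt_of_le hyb with rfl | hlt
      · exact Or.inr (Finset.mem_insert_self _ _)
      · exact absurd ⟨hmid.1.trans hxy, hlt⟩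
          (hgap y (Finset.mem_erase.mpr ⟨ne_of_gt hxy, hyT⟩))
    · have hgap' : ∀ w ∈ T, ¬(a < w ∧ w < b) := by
        intro w hw hwab
        rcases eq_or_ne w x with rfl | hwx
        · exact hmid hwab
        · exact hgap w (Finset.mem_erase.mpr ⟨hwx, hw⟩) hwab
      rcases hskip a haT b hbT hab hgap' with hS | hS
      · exact Or.inl (Finset.mem_insert_of_mem (Finset.mem_erase.mpr ⟨hax, hS⟩))
      · exact Or.inr (Finset.mem_insert_of_mem (Finset.mem_erase.mpr ⟨hbx, hS⟩))
end

section
/- Let ε be a real number with 0 < ε < 2, let i be a natural number, and let b : ℕ → ℝ be a nonnegative function satisfying b(j) ≤ (2−ε)^j + b(j+1)/2 for every j < i, and suppose b(i) ≤ 2^i. Then b(0) ≤ 2/ε + 1. -/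
/-- Property 1 of working-todolists is restored by partial rebuilding: if `b` is
nonnegative, satisfies `b j ≤ (2-ε)^j + b (j+1) / 2` for `j < i`, and `b i ≤ 2^i`, then
`b 0 ≤ 2/ε + 1`. -/
theorem working_todolist_L0_bound (ε : ℝ) (hε0 : 0 < ε) (hε2 : ε < 2) (i : ℕ)
    (b : ℕ → ℝ) (hb : ∀ j, 0 ≤ b j)
    (hrec : ∀ j < i, b j ≤ (2 - ε) ^ j + b (j + 1) / 2)
    (htop : b i ≤ 2 ^ i) :
    b 0 ≤ 2 / ε + 1 := by
  set r : ℝ := (2 - ε) / 2 with hr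
  have hr0 : 0 ≤ r := by rw [hr]; linarith
  have hr1 : r < 1 := by rw [hr]; linarith
  have key : ∀ n, (∀ j < n, b j ≤ (2 - ε) ^ j + b (j + 1) / 2) →
      b 0 ≤ (∑ j ∈ Finset.range n, r ^ j) + b n / 2 ^ n := by
    intro n
    induction n with
    | zero => intro _; simp
    | succ m ih =>
      intro h
      have h1 : b 0 ≤ (∑ j ∈ Finset.range m, r ^ j) + b m / 2 ^ m :=
        ih fun j hj => h j (Nat.lt_succ_of_lt hj)
      have h2 : b m ≤ (2 - ε) ^ m + b (m + 1) / 2 := h m (Nat.lt_succ_self m)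
      have hp : (0:ℝ) < 2 ^ m := by positivity
      have h3 : b m / 2 ^ m ≤ r ^ m + b (m + 1) / 2 ^ (m + 1) := by
        rw [hr, div_pow, pow_succ, div_le_iff₀ hp]
        have : ((2 - ε) ^ m / 2 ^ m + b (m + 1) / (2 ^ m * 2)) * 2 ^ m
            = (2 - ε) ^ m + b (m + 1) / 2 := by
          field_simp
        rw [this]; exact h2
      calc b 0 ≤ (∑ j ∈ Finset.range m, r ^ j) + b m / 2 ^ m := h1
        _ ≤ (∑ j ∈ Finset.range m, r ^ j) + (r ^ m + b (m + 1) / 2 ^ (m + 1)) := by linarith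
        _ = (∑ j ∈ Finset.range (m + 1), r ^ j) + b (m + 1) / 2 ^ (m + 1) := by
            rw [Finset.sum_range_succ]; ring
  have h0 := key i hrec
  have hgeom : (∑ j ∈ Finset.range i, r ^ j) ≤ 2 / ε := by
    rw [le_div_iff₀ hε0]
    have hm := geom_sum_mul r i
    have hri : 0 ≤ r ^ i := pow_nonneg hr0 i
    nlinarith [hm]
  have hlast : b i / 2 ^ i ≤ 1 := by
    rw [div_le_one (by positivity)]; exact htop
  linarith
end

section
/- Let ε be a real number with 0 < ε < 1, let i ≥ 1 be a natural number, and let N be a real number with 0 ≤ N ≤ (2−ε/2)^i. Then ∑_{j=0}^{i−1} ((2−ε)^j/ε + N/2^{i−j} − (2−ε/2)^j) ≤ (2−ε)^i/(ε(1−ε)) − (ε/2)·N + (1 + ε/2). -/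
lemma geo_half_sum : ∀ i : ℕ, ∑ j ∈ Finset.range i, (1:ℝ) / 2 ^ (i - j) = 1 - 1 / 2 ^ i := by
  intro i
  induction i with
  | zero => simp
  | succ n ih =>
    rw [Finset.sum_range_succ]
    have h : ∀ j ∈ Finset.range n, (1:ℝ) / 2 ^ (n + 1 - j) = (1/2) * ((1:ℝ) / 2 ^ (n - j)) := by
      intro j hj
      have hjn : j ≤ n := Nat.le_of_lt_succ (Nat.lt_succ_of_lt (Finset.mem_range.mp hj))
      have : n + 1 - j = (n - j) + 1 := by omega
      rw [this, pow_succ]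
      ring
    rw [Finset.sum_congr rfl h, ← Finset.mul_sum, ih]
    simp only [Nat.add_sub_cancel_left, pow_succ]
    ring

/-- Potential-change estimate in the amortized analysis of a working-todolist search. -/
theorem working_todolist_potential_change (ε : ℝ) (hε0 : 0 < ε) (hε1 : ε < 1)
    (i : ℕ) (hi : 1 ≤ i) (N : ℝ) (hN0 : 0 ≤ N) (hN : N ≤ (2 - ε / 2) ^ i) :
    ∑ j ∈ Finset.range i, ((2 - ε) ^ j / ε + N / 2 ^ (i - j) - (2 - ε / 2) ^ j)
      ≤ (2 - ε) ^ i / (ε * (1 - ε)) - (ε / 2) * N + (1 + ε / 2) := by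
  have hε2 : (0:ℝ) < 1 - ε := by linarith
  have hε3 : (0:ℝ) < 1 - ε / 2 := by linarith
  have hx1 : (2 - ε : ℝ) ≠ 1 := by intro h; linarith [h]
  have hx2 : (2 - ε / 2 : ℝ) ≠ 1 := by intro h; linarith [h]
  -- split the sum
  rw [Finset.sum_sub_distrib, Finset.sum_add_distrib]
  have hS1 : ∑ j ∈ Finset.range i, (2 - ε) ^ j / ε = ((2 - ε) ^ i - 1) / (1 - ε) / ε := by
    rw [← Finset.sum_div, geom_sum_eq hx1]
    congr 1
    rw [show (2 - ε - 1 : ℝ) = 1 - ε by ring]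
  have hS2 : ∑ j ∈ Finset.range i, N / 2 ^ (i - j) = N * (1 - 1 / 2 ^ i) := by
    have : ∀ j ∈ Finset.range i, N / 2 ^ (i - j) = N * ((1:ℝ) / 2 ^ (i - j)) := by
      intro j _; ring
    rw [Finset.sum_congr rfl this, ← Finset.mul_sum, geo_half_sum]
  have hS3 : ∑ j ∈ Finset.range i, (2 - ε / 2) ^ j = ((2 - ε / 2) ^ i - 1) / (1 - ε / 2) := by
    rw [geom_sum_eq hx2]
    congr 1
    ring
  rw [hS1, hS2, hS3]
  set A := (2 - ε) ^ i with hA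
  set B := (2 - ε / 2) ^ i with hB
  have hB1 : (1:ℝ) ≤ B := by
    apply one_le_pow₀
    linarith
  have ht0 : (0:ℝ) < 1 / 2 ^ i := by positivity
  have ht1 : (1:ℝ) / 2 ^ i ≤ 1 := by
    rw [div_le_one (by positivity)]
    exact one_le_pow₀ (by norm_num)
  -- bound S1
  have h1 : (A - 1) / (1 - ε) / ε ≤ A / (ε * (1 - ε)) := by
    rw [div_div, mul_comm (1 - ε) ε]
    gcongr
    linarith
  -- bound S3 from below
  have h3 : (1 + ε / 2) * (B - 1) ≤ (B - 1) / (1 - ε / 2) := by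
    rw [le_div_iff₀ hε3]
    nlinarith [hB1, mul_nonneg (sub_nonneg.mpr hB1) (sq_nonneg ε)]
  have h4 : (1 + ε / 2) * N ≤ (1 + ε / 2) * B :=
    mul_le_mul_of_nonneg_left hN (by linarith)
  have h5 : (0:ℝ) ≤ N * (1 / 2 ^ i) := mul_nonneg hN0 ht0.le
  have h6 : N * (1 - 1 / 2 ^ i) = N - N * (1 / 2 ^ i) := by ring
  nlinarith [h1, h3, h4, h5, h6]
end
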